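/- (Hardy-type inequality adapted to the Schwarzschild metric.) There is an absolute constant C > 0 with the following property. Let M > 0 and let φ : (2M,∞) → ℝ be continuously differentiable with φ(r) → 0 as r → ∞. Then ∫_{2M}^{∞} (1 − 2M/r)^{-1/2} φ(r)² dr ≤ C ∫_{2M}^{∞} (1 − 2M/r)^{1/2} φ'(r)² r² dr, where both sides are allowed to equal +∞. -/

import Mathlib

open MeasureTheory Set
open scoped ENNReal NNReal

noncomputable def hwV (M s : ℝ) : ℝ := (1 - Real.sqrt (1 - 2 * M / s)) / M

lemma hw_rpos {M r : ℝ} (hM : 0 < M) (hr : 2 * M < r) : 0 < r := by linarith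

lemma hw_xpos {M r : ℝ} (hM : 0 < M) (hr : 2 * M < r) : 0 < 1 - 2 * M / r := by
  have hr0 : 0 < r := hw_rpos hM hr
  have h1 : 2 * M / r < 1 := (div_lt_one hr0).2 hr
  linarith

lemma hw_sqrt_lt_one {M r : ℝ} (hM : 0 < M) (hr : 2 * M < r) :
    Real.sqrt (1 - 2 * M / r) < 1 := by
  have hr0 : 0 < r := hw_rpos hM hr
  have h2 : 0 < 2 * M / r := div_pos (by linarith) hr0
  rw [Real.sqrt_lt' one_pos]
  nlinarith

lemma hwV_pos {M r : ℝ} (hM : 0 < M) (hr : 2 * M < r) : 0 < hwV M r :=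
  div_pos (by linarith [hw_sqrt_lt_one hM hr]) hM

lemma hwV_le {M r : ℝ} (hM : 0 < M) (hr : 2 * M < r) : hwV M r ≤ 2 / r := by
  have hx := hw_xpos hM hr
  have h1 : 1 - 2 * M / r ≤ Real.sqrt (1 - 2 * M / r) := by
    rw [Real.le_sqrt hx.le (by linarith)]
    have h2 : 0 < 2 * M / r := div_pos (by linarith) (hw_rpos hM hr)
    nlinarith
  have h3 : hwV M r ≤ (2 * M / r) / M := by
    unfold hwV
    gcongr
    linarith
  have h4 : (2 * M / r) / M = 2 / r := by
    rw [div_div, mul_comm r M, ← div_div]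
    field_simp
  linarith

lemma hw_sqrt_hasDeriv {M s : ℝ} (hM : 0 < M) (hs : 2 * M < s) :
    HasDerivAt (fun t => Real.sqrt (1 - 2 * M / t)) ((M / s ^ 2) / Real.sqrt (1 - 2 * M / s)) s := by
  have hs0 : s ≠ 0 := (hw_rpos hM hs).ne'
  have h1 : HasDerivAt (fun t : ℝ => 1 - 2 * M / t) (2 * M / s ^ 2) s := by
    have h := ((hasDerivAt_inv hs0).const_mul (2 * M)).const_sub 1
    have e : (fun t : ℝ => 1 - 2 * M * t⁻¹) = fun t : ℝ => 1 - 2 * M / t := by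
      funext t; rw [div_eq_mul_inv]
    rw [e] at h
    convert h using 1
    all_goals first | rfl | field_simp
  have := h1.sqrt (ne_of_gt (hw_xpos hM hs))
  convert this using 1
  ring

noncomputable def hwv (M s : ℝ) : ℝ := Real.sqrt (1 - 2 * M / s) * s ^ 2

lemma hwv_pos {M s : ℝ} (hM : 0 < M) (hs : 2 * M < s) : 0 < hwv M s :=
  mul_pos (Real.sqrt_pos.2 (hw_xpos hM hs)) (pow_pos (hw_rpos hM hs) 2)

lemma hwV_hasDeriv {M s : ℝ} (hM : 0 < M) (hs : 2 * M < s) :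
    HasDerivAt (fun t => hwV M t) (-(1 / hwv M s)) s := by
  have h := ((hw_sqrt_hasDeriv hM hs).const_sub 1).div_const M
  have hsq : Real.sqrt (1 - 2 * M / s) ≠ 0 := (Real.sqrt_pos.2 (hw_xpos hM hs)).ne'
  have hs0 : s ≠ 0 := (hw_rpos hM hs).ne'
  have hM0 : M ≠ 0 := hM.ne'
  have key : -(M / s ^ 2 / Real.sqrt (1 - 2 * M / s)) / M
      = -(1 / (Real.sqrt (1 - 2 * M / s) * s ^ 2)) := by
    rw [div_div, neg_div, mul_comm (s ^ 2), div_right_comm, div_self hM0]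
  rw [hwv, ← key]
  unfold hwV
  exact h

lemma hwh_hasDeriv {M s : ℝ} (hM : 0 < M) (hs : 2 * M < s) :
    HasDerivAt (fun t => -2 * Real.sqrt (hwV M t))
      (1 / (hwv M s * Real.sqrt (hwV M s))) s := by
  have h := ((hwV_hasDeriv hM hs).sqrt (hwV_pos hM hs).ne').const_mul (-2)
  have h1 : Real.sqrt (hwV M s) ≠ 0 := (Real.sqrt_pos.2 (hwV_pos hM hs)).ne'
  have h2 : hwv M s ≠ 0 := (hwv_pos hM hs).ne'
  convert h using 1
  all_goals try rfl
  field_simp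
  try ring_nf

lemma hw_tendsto {M : ℝ} (hM : 0 < M) :
    Filter.Tendsto (fun s => -2 * Real.sqrt (hwV M s)) Filter.atTop (nhds 0) := by
  have t1 : Filter.Tendsto (fun s : ℝ => 2 * M / s) Filter.atTop (nhds 0) := by
    simpa [div_eq_mul_inv] using tendsto_inv_atTop_zero.const_mul (2 * M)
  have t2 : Filter.Tendsto (fun s : ℝ => 1 - 2 * M / s) Filter.atTop (nhds 1) := by
    simpa using tendsto_const_nhds.sub t1
  have t3 : Filter.Tendsto (fun s : ℝ => Real.sqrt (1 - 2 * M / s)) Filter.atTop (nhds 1) := by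
    have := (Real.continuous_sqrt.tendsto 1).comp t2
    simpa [Function.comp_def] using this
  have t4 : Filter.Tendsto (fun s => hwV M s) Filter.atTop (nhds 0) := by
    have := (t3.const_sub 1).div_const M
    simpa [hwV] using this
  have t5 : Filter.Tendsto (fun s => Real.sqrt (hwV M s)) Filter.atTop (nhds 0) := by
    have := (Real.continuous_sqrt.tendsto 0).comp t4
    simpa [Function.comp_def] using this
  simpa using t5.const_mul (-2)

lemma hw_lint_inner {M r : ℝ} (hM : 0 < M) (hr : 2 * M < r) :
    (∫⁻ s in Ioi r, ENNReal.ofReal (1 / (hwv M s * Real.sqrt (hwV M s)))) =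
      ENNReal.ofReal (2 * Real.sqrt (hwV M r)) := by
  set g' : ℝ → ℝ := fun s => 1 / (hwv M s * Real.sqrt (hwV M s)) with hg'
  have hderiv : ∀ x ∈ Ioi r, HasDerivAt (fun t => -2 * Real.sqrt (hwV M t)) (g' x) x :=
    fun x hx => hwh_hasDeriv hM (lt_trans hr hx)
  have hnn : ∀ x ∈ Ioi r, 0 ≤ g' x := by
    intro x hx
    have := hwv_pos hM (lt_trans hr hx)
    have := hwV_pos hM (lt_trans hr hx)
    positivity
  have hcont : ContinuousWithinAt (fun t => -2 * Real.sqrt (hwV M t)) (Ici r) r :=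
    (hwh_hasDeriv hM hr).continuousAt.continuousWithinAt
  have hint : IntegrableOn g' (Ioi r) volume :=
    integrableOn_Ioi_deriv_of_nonneg hcont hderiv hnn (hw_tendsto hM)
  have hval := integral_Ioi_of_hasDerivAt_of_nonneg hcont hderiv hnn (hw_tendsto hM)
  rw [← ofReal_integral_eq_lintegral_ofReal hint
    ((ae_restrict_iff' measurableSet_Ioi).2 (Filter.Eventually.of_forall hnn)), hval]
  norm_num

lemma hw_phi_bound {M r : ℝ} (hM : 0 < M) (hr : 2 * M < r) {φ : ℝ → ℝ}
    (hφ : ContDiffOn ℝ 1 φ (Set.Ioi (2 * M)))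
    (hlim : Filter.Tendsto φ Filter.atTop (nhds 0)) :
    ENNReal.ofReal |φ r| ≤ ∫⁻ s in Ioi r, ENNReal.ofReal |deriv φ s| := by
  by_cases htop : (∫⁻ s in Ioi r, ENNReal.ofReal |deriv φ s|) = ⊤
  · simp [htop]
  have hmeas : Measurable (deriv φ) := measurable_deriv φ
  have hne : (∫⁻ s in Ioi r, (‖deriv φ s‖₊ : ℝ≥0∞)) ≠ ⊤ := by
    simpa [← enorm_eq_nnnorm, Real.enorm_eq_ofReal_abs] using htop
  have hint : IntegrableOn (deriv φ) (Ioi r) volume :=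
    ⟨hmeas.aestronglyMeasurable, lt_top_iff_ne_top.2 hne⟩
  have hd : ∀ x ∈ Ioi (2 * M), HasDerivAt φ (deriv φ x) x := by
    intro x hx
    have h1 : DifferentiableOn ℝ φ (Ioi (2 * M)) := hφ.differentiableOn one_ne_zero
    exact (h1.differentiableAt (Ioi_mem_nhds hx)).hasDerivAt
  have heq : ∀ᶠ R in Filter.atTop, φ R - (∫ x in r..R, deriv φ x) = φ r := by
    filter_upwards [Filter.eventually_ge_atTop r] with R hR
    have hsub : ∫ x in r..R, deriv φ x = φ R - φ r := by
      apply intervalIntegral.integral_eq_sub_of_hasDerivAt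
      · intro x hx
        rw [uIcc_of_le hR] at hx
        exact hd x (lt_of_lt_of_le hr hx.1)
      · rw [intervalIntegrable_iff_integrableOn_Ioc_of_le hR]
        exact hint.mono_set Ioc_subset_Ioi_self
    rw [hsub]; ring
  have hTint := intervalIntegral_tendsto_integral_Ioi r hint Filter.tendsto_id
  have hφr : φ r = 0 - ∫ x in Ioi r, deriv φ x :=
    (tendsto_nhds_unique ((hlim.sub hTint).congr' heq) tendsto_const_nhds).symm
  have habs : |φ r| ≤ ∫ x in Ioi r, |deriv φ x| := by
    rw [hφr, zero_sub, abs_neg]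
    simpa [Real.norm_eq_abs] using
      norm_integral_le_integral_norm (μ := volume.restrict (Ioi r)) (deriv φ)
  calc ENNReal.ofReal |φ r| ≤ ENNReal.ofReal (∫ x in Ioi r, |deriv φ x|) :=
        ENNReal.ofReal_le_ofReal habs
    _ = ∫⁻ s in Ioi r, ENNReal.ofReal |deriv φ s| :=
        ofReal_integral_eq_lintegral_ofReal hint.abs
          (Filter.Eventually.of_forall fun x => abs_nonneg _)

lemma hw_w_meas (M : ℝ) : Measurable (fun s => hwv M s * Real.sqrt (hwV M s)) := by
  have m1 : Measurable (fun s : ℝ => 1 - 2 * M / s) :=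
    measurable_const.sub (measurable_const.div measurable_id)
  have m2 : Measurable (fun s : ℝ => Real.sqrt (1 - 2 * M / s)) :=
    Real.continuous_sqrt.measurable.comp m1
  have m3 : Measurable (fun s : ℝ => hwv M s) := m2.mul (measurable_id.pow_const 2)
  have m4 : Measurable (fun s : ℝ => hwV M s) := (measurable_const.sub m2).div_const M
  exact m3.mul (Real.continuous_sqrt.measurable.comp m4)

lemma hw_pointwise {M r : ℝ} (hM : 0 < M) (hr : 2 * M < r) {φ : ℝ → ℝ}
    (hφ : ContDiffOn ℝ 1 φ (Set.Ioi (2 * M)))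
    (hlim : Filter.Tendsto φ Filter.atTop (nhds 0)) :
    ENNReal.ofReal ((φ r) ^ 2 / Real.sqrt (1 - 2 * M / r)) ≤
      ENNReal.ofReal (2 * Real.sqrt (hwV M r) / Real.sqrt (1 - 2 * M / r)) *
        ∫⁻ s in Ioi r, ENNReal.ofReal ((deriv φ s) ^ 2 * (hwv M s * Real.sqrt (hwV M s))) := by
  set w : ℝ → ℝ := fun s => hwv M s * Real.sqrt (hwV M s) with hw_def
  have hwpos : ∀ s, r < s → 0 < w s := fun s hs =>
    mul_pos (hwv_pos hM (lt_trans hr hs)) (Real.sqrt_pos.2 (hwV_pos hM (lt_trans hr hs)))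
  set Fh : ℝ → ℝ≥0∞ := fun s => ENNReal.ofReal (|deriv φ s| * Real.sqrt (w s)) with hFh_def
  set Gh : ℝ → ℝ≥0∞ := fun s => ENNReal.ofReal (1 / Real.sqrt (w s)) with hGh_def
  have mw : Measurable w := hw_w_meas M
  have mF : Measurable Fh :=
    (((measurable_deriv φ).abs).mul (Real.continuous_sqrt.measurable.comp mw)).ennreal_ofReal
  have mG : Measurable Gh :=
    (measurable_const.div (Real.continuous_sqrt.measurable.comp mw)).ennreal_ofReal
  -- split |φ'| = Fh * Gh on Ioi r
  have hsplit : (∫⁻ s in Ioi r, ENNReal.ofReal |deriv φ s|) =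
      ∫⁻ s in Ioi r, (Fh * Gh) s := by
    refine setLIntegral_congr_fun measurableSet_Ioi ?_
    intro s hs
    have h1 : 0 < Real.sqrt (w s) := Real.sqrt_pos.2 (hwpos s hs)
    simp only [Pi.mul_apply, hFh_def, hGh_def]
    rw [← ENNReal.ofReal_mul (by positivity)]
    congr 1
    field_simp
  have conj : Real.HolderConjugate 2 2 := Real.HolderConjugate.two_two
  have hCS := ENNReal.lintegral_mul_le_Lp_mul_Lq (volume.restrict (Ioi r)) conj
    mF.aemeasurable mG.aemeasurable
  -- identify the two factors
  have hFsq : (∫⁻ s in Ioi r, Fh s ^ (2:ℝ)) =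
      ∫⁻ s in Ioi r, ENNReal.ofReal ((deriv φ s) ^ 2 * w s) := by
    refine setLIntegral_congr_fun measurableSet_Ioi ?_
    intro s hs
    have h0 : (0:ℝ) ≤ |deriv φ s| * Real.sqrt (w s) := by positivity
    beta_reduce
    rw [show (2:ℝ) = ((2:ℕ):ℝ) by norm_num, ENNReal.rpow_natCast, hFh_def,
      ← ENNReal.ofReal_pow h0]
    congr 1
    rw [mul_pow, sq_abs, Real.sq_sqrt (hwpos s hs).le]
  have hGsq : (∫⁻ s in Ioi r, Gh s ^ (2:ℝ)) = ENNReal.ofReal (2 * Real.sqrt (hwV M r)) := by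
    rw [← hw_lint_inner hM hr]
    refine setLIntegral_congr_fun measurableSet_Ioi ?_
    intro s hs
    have h1 : 0 < w s := hwpos s hs
    beta_reduce
    rw [show (2:ℝ) = ((2:ℕ):ℝ) by norm_num, ENNReal.rpow_natCast, hGh_def,
      ← ENNReal.ofReal_pow (by positivity)]
    congr 1
    rw [div_pow, one_pow, Real.sq_sqrt h1.le]
  -- from |φ r| bound
  have h1 := hw_phi_bound hM hr hφ hlim
  have h2 : ENNReal.ofReal |φ r| ≤
      ((∫⁻ s in Ioi r, Fh s ^ (2:ℝ)) ^ (1/(2:ℝ))) * ((∫⁻ s in Ioi r, Gh s ^ (2:ℝ)) ^ (1/(2:ℝ))) :=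
    le_trans h1 (le_trans (le_of_eq hsplit) hCS)
  have h3 : ENNReal.ofReal (φ r ^ 2) ≤
      (∫⁻ s in Ioi r, ENNReal.ofReal ((deriv φ s) ^ 2 * w s)) *
        ENNReal.ofReal (2 * Real.sqrt (hwV M r)) := by
    have hsq : ENNReal.ofReal (φ r ^ 2) = (ENNReal.ofReal |φ r|) ^ (2:ℕ) := by
      rw [← ENNReal.ofReal_pow (abs_nonneg _), sq_abs]
    rw [hsq]
    calc (ENNReal.ofReal |φ r|) ^ (2:ℕ)
        ≤ (((∫⁻ s in Ioi r, Fh s ^ (2:ℝ)) ^ (1/(2:ℝ))) *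
            ((∫⁻ s in Ioi r, Gh s ^ (2:ℝ)) ^ (1/(2:ℝ)))) ^ (2:ℕ) :=
          pow_le_pow_left₀ (zero_le) h2 2
      _ = (∫⁻ s in Ioi r, Fh s ^ (2:ℝ)) * (∫⁻ s in Ioi r, Gh s ^ (2:ℝ)) := by
          rw [mul_pow, ← ENNReal.rpow_natCast (_ ^ (1/(2:ℝ))), ← ENNReal.rpow_natCast (_ ^ (1/(2:ℝ))),
            ← ENNReal.rpow_mul, ← ENNReal.rpow_mul]
          norm_num
      _ = (∫⁻ s in Ioi r, ENNReal.ofReal ((deriv φ s) ^ 2 * w s)) *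
            ENNReal.ofReal (2 * Real.sqrt (hwV M r)) := by rw [hFsq, hGsq]
  -- multiply by 1/sqrt
  have hXpos : 0 < Real.sqrt (1 - 2 * M / r) := Real.sqrt_pos.2 (hw_xpos hM hr)
  have hfinal : ENNReal.ofReal ((φ r) ^ 2 / Real.sqrt (1 - 2 * M / r)) =
      ENNReal.ofReal (1 / Real.sqrt (1 - 2 * M / r)) * ENNReal.ofReal (φ r ^ 2) := by
    rw [← ENNReal.ofReal_mul (by positivity)]
    congr 1
    field_simp
  rw [hfinal]
  calc ENNReal.ofReal (1 / Real.sqrt (1 - 2 * M / r)) * ENNReal.ofReal (φ r ^ 2)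
      ≤ ENNReal.ofReal (1 / Real.sqrt (1 - 2 * M / r)) *
        ((∫⁻ s in Ioi r, ENNReal.ofReal ((deriv φ s) ^ 2 * w s)) *
          ENNReal.ofReal (2 * Real.sqrt (hwV M r))) := mul_le_mul_right h3 _
    _ = ENNReal.ofReal (2 * Real.sqrt (hwV M r) / Real.sqrt (1 - 2 * M / r)) *
        ∫⁻ s in Ioi r, ENNReal.ofReal ((deriv φ s) ^ 2 * (hwv M s * Real.sqrt (hwV M s))) := by
        rw [← mul_comm (ENNReal.ofReal (2 * Real.sqrt (hwV M r))) _, ← mul_assoc,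
          mul_comm (ENNReal.ofReal (1 / Real.sqrt (1 - 2 * M / r))) _,
          ← ENNReal.ofReal_mul (by positivity)]
        congr 2
        field_simp

lemma hw_ptbd {M r : ℝ} (hM : 0 < M) (hr : 2 * M < r) :
    2 * Real.sqrt (hwV M r) / Real.sqrt (1 - 2 * M / r)
      ≤ 2 * Real.sqrt 2 / Real.sqrt (r - 2 * M) := by
  have hr0 : 0 < r := hw_rpos hM hr
  have h2 : 0 < r - 2 * M := by linarith
  have e1 : Real.sqrt (1 - 2 * M / r) = Real.sqrt (r - 2 * M) / Real.sqrt r := by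
    rw [show 1 - 2 * M / r = (r - 2 * M) / r by field_simp, Real.sqrt_div h2.le]
  have e2 : Real.sqrt (hwV M r) ≤ Real.sqrt 2 / Real.sqrt r := by
    rw [← Real.sqrt_div (by norm_num : (0:ℝ) ≤ 2) r]
    exact Real.sqrt_le_sqrt (hwV_le hM hr)
  have hsr : 0 < Real.sqrt r := Real.sqrt_pos.2 hr0
  have hs2 : 0 < Real.sqrt (r - 2 * M) := Real.sqrt_pos.2 h2
  rw [e1, div_div_eq_mul_div]
  gcongr ?_ / _
  calc 2 * Real.sqrt (hwV M r) * Real.sqrt r ≤ 2 * (Real.sqrt 2 / Real.sqrt r) * Real.sqrt r := by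
        gcongr
    _ = 2 * Real.sqrt 2 := by field_simp

lemma hw_W_bound {M s : ℝ} (hM : 0 < M) (hs : 2 * M < s) :
    (∫⁻ r in Ioo (2 * M) s,
        ENNReal.ofReal (2 * Real.sqrt (hwV M r) / Real.sqrt (1 - 2 * M / r)))
      ≤ ENNReal.ofReal (4 * Real.sqrt 2 * Real.sqrt (s - 2 * M)) := by
  have hle : 2 * M ≤ s := hs.le
  set h : ℝ → ℝ := fun r => 2 * Real.sqrt 2 * (r - 2 * M) ^ (-(1/2) : ℝ) with hh
  have hii : IntervalIntegrable h volume (2 * M) s := by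
    have h0 : IntervalIntegrable (fun x : ℝ => x ^ (-(1/2) : ℝ)) volume 0 (s - 2 * M) :=
      intervalIntegral.intervalIntegrable_rpow' (by norm_num)
    have h1 := (h0.comp_sub_right (2 * M)).const_mul (2 * Real.sqrt 2)
    have e2 : (0 + 2 * M : ℝ) = 2 * M := by ring
    have e3 : (s - 2 * M + 2 * M : ℝ) = s := by ring
    rw [e2, e3] at h1
    exact h1
  have hval : (∫ r in (2 * M)..s, h r) = 4 * Real.sqrt 2 * Real.sqrt (s - 2 * M) := by
    rw [hh]
    rw [intervalIntegral.integral_const_mul]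
    rw [intervalIntegral.integral_comp_sub_right (fun x : ℝ => x ^ (-(1/2) : ℝ)) (2 * M)]
    rw [sub_self]
    rw [integral_rpow (Or.inl (by norm_num))]
    rw [Real.zero_rpow (by norm_num)]
    rw [show (-(1/2) : ℝ) + 1 = 1/2 by norm_num]
    rw [← Real.sqrt_eq_rpow]
    ring
  -- pointwise bound then comparison
  calc (∫⁻ r in Ioo (2 * M) s,
        ENNReal.ofReal (2 * Real.sqrt (hwV M r) / Real.sqrt (1 - 2 * M / r)))
      ≤ ∫⁻ r in Ioo (2 * M) s, ENNReal.ofReal (h r) := by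
        refine setLIntegral_mono' measurableSet_Ioo fun r hrs => ?_
        apply ENNReal.ofReal_le_ofReal
        have := hw_ptbd hM hrs.1
        rw [hh]
        have h2 : 0 < r - 2 * M := by linarith [hrs.1]
        calc 2 * Real.sqrt (hwV M r) / Real.sqrt (1 - 2 * M / r)
            ≤ 2 * Real.sqrt 2 / Real.sqrt (r - 2 * M) := this
          _ = 2 * Real.sqrt 2 * (r - 2 * M) ^ (-(1/2) : ℝ) := by
              rw [Real.rpow_neg h2.le, ← Real.sqrt_eq_rpow, div_eq_mul_inv]
    _ ≤ ∫⁻ r in Ioc (2 * M) s, ENNReal.ofReal (h r) :=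
        lintegral_mono' (Measure.restrict_mono Ioo_subset_Ioc_self le_rfl) le_rfl
    _ = ENNReal.ofReal (∫ r in Ioc (2 * M) s, h r) := by
        rw [ofReal_integral_eq_lintegral_ofReal
          ((intervalIntegrable_iff_integrableOn_Ioc_of_le hle).1 hii)
          ((ae_restrict_iff' measurableSet_Ioc).2 (Filter.Eventually.of_forall fun r hrs => by
            have h2 : 0 < r - 2 * M := by linarith [hrs.1]
            rw [hh]
            positivity))]
    _ = ENNReal.ofReal (4 * Real.sqrt 2 * Real.sqrt (s - 2 * M)) := by
        rw [← intervalIntegral.integral_of_le hle, hval]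

/-- **Hardy-type inequality adapted to the Schwarzschild metric.** There is an absolute
constant `C > 0` such that for every mass `M > 0` and every continuously differentiable
`φ : (2M,∞) → ℝ` with `φ(r) → 0` as `r → ∞`,
`∫_{2M}^∞ (1 - 2M/r)^{-1/2} φ(r)² dr ≤ C ∫_{2M}^∞ (1 - 2M/r)^{1/2} φ'(r)² r² dr`,
where both sides are allowed to be `+∞` (they are taken in `ℝ≥0∞`). -/
theorem hardy_inequality_schwarzschild :
    ∃ C : ℝ, 0 < C ∧
      ∀ M : ℝ, 0 < M →
        ∀ φ : ℝ → ℝ,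
          ContDiffOn ℝ 1 φ (Set.Ioi (2 * M)) →
          Filter.Tendsto φ Filter.atTop (nhds 0) →
          (∫⁻ r in Set.Ioi (2 * M),
              ENNReal.ofReal ((φ r) ^ 2 / Real.sqrt (1 - 2 * M / r)))
            ≤ ENNReal.ofReal C *
              ∫⁻ r in Set.Ioi (2 * M),
                ENNReal.ofReal (Real.sqrt (1 - 2 * M / r) * (deriv φ r) ^ 2 * r ^ 2) := by
  refine ⟨8, by norm_num, ?_⟩
  intro M hM φ hφ hlim
  set f : ℝ → ℝ≥0∞ :=
    fun r => ENNReal.ofReal (2 * Real.sqrt (hwV M r) / Real.sqrt (1 - 2 * M / r)) with hf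
  set g : ℝ → ℝ≥0∞ :=
    fun s => ENNReal.ofReal ((deriv φ s) ^ 2 * (hwv M s * Real.sqrt (hwV M s))) with hg
  have m1 : Measurable (fun s : ℝ => 1 - 2 * M / s) :=
    measurable_const.sub (measurable_const.div measurable_id)
  have m2 : Measurable (fun s : ℝ => Real.sqrt (1 - 2 * M / s)) :=
    Real.continuous_sqrt.measurable.comp m1
  have m4 : Measurable (fun s : ℝ => hwV M s) := (measurable_const.sub m2).div_const M
  have mf : Measurable f := by
    apply Measurable.ennreal_ofReal
    exact ((Real.continuous_sqrt.measurable.comp m4).const_mul 2).div m2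
  have mg : Measurable g := by
    apply Measurable.ennreal_ofReal
    exact ((measurable_deriv φ).pow_const 2).mul (hw_w_meas M)
  have step1 : (∫⁻ r in Set.Ioi (2 * M),
        ENNReal.ofReal ((φ r) ^ 2 / Real.sqrt (1 - 2 * M / r)))
      ≤ ∫⁻ r in Ioi (2 * M), f r * ∫⁻ s in Ioi r, g s :=
    setLIntegral_mono' measurableSet_Ioi fun r hr => hw_pointwise hM hr hφ hlim
  have step2 : (∫⁻ r in Ioi (2 * M), f r * ∫⁻ s in Ioi r, g s)
      = ∫⁻ r in Ioi (2 * M), ∫⁻ s in Ioi (2 * M), f r * (Ioi r).indicator g s := by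
    refine setLIntegral_congr_fun measurableSet_Ioi (fun r hr => ?_)
    rw [lintegral_const_mul _ (mg.indicator measurableSet_Ioi),
      lintegral_indicator measurableSet_Ioi, Measure.restrict_restrict measurableSet_Ioi,
      Ioi_inter_Ioi, max_eq_left (le_of_lt hr)]
  have mF : Measurable (Function.uncurry fun r s => f r * (Ioi r).indicator g s) := by
    have e : (Function.uncurry fun r s => f r * (Ioi r).indicator g s)
        = fun p : ℝ × ℝ => (f p.1 * g p.2) * {q : ℝ × ℝ | q.1 < q.2}.indicator 1 p := by
      funext p
      by_cases h : p.1 < p.2 <;>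
        simp [Function.uncurry, Set.indicator, h, Set.mem_Ioi]
    rw [e]
    exact ((mf.comp measurable_fst).mul (mg.comp measurable_snd)).mul
      (measurable_one.indicator (measurableSet_lt measurable_fst measurable_snd))
  have swap : (∫⁻ r in Ioi (2 * M), ∫⁻ s in Ioi (2 * M), f r * (Ioi r).indicator g s)
      = ∫⁻ s in Ioi (2 * M), ∫⁻ r in Ioi (2 * M), f r * (Ioi r).indicator g s :=
    lintegral_lintegral_swap mF.aemeasurable
  have step3 : (∫⁻ s in Ioi (2 * M), ∫⁻ r in Ioi (2 * M), f r * (Ioi r).indicator g s)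
      = ∫⁻ s in Ioi (2 * M), g s * ∫⁻ r in Ioo (2 * M) s, f r := by
    refine setLIntegral_congr_fun measurableSet_Ioi (fun s hs => ?_)
    have e : ∀ r, f r * (Ioi r).indicator g s = g s * (Iio s).indicator f r := by
      intro r
      by_cases h : r < s
      · simp [Set.indicator, h, Set.mem_Ioi, Set.mem_Iio, mul_comm]
      · simp [Set.indicator, h, Set.mem_Ioi, Set.mem_Iio]
    simp_rw [e]
    rw [lintegral_const_mul _ (mf.indicator measurableSet_Iio),
      lintegral_indicator measurableSet_Iio, Measure.restrict_restrict measurableSet_Iio,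
      inter_comm, Ioi_inter_Iio]
  have step4 : (∫⁻ s in Ioi (2 * M), g s * ∫⁻ r in Ioo (2 * M) s, f r)
      ≤ ∫⁻ s in Ioi (2 * M), ENNReal.ofReal 8 *
          ENNReal.ofReal (Real.sqrt (1 - 2 * M / s) * (deriv φ s) ^ 2 * s ^ 2) := by
    refine setLIntegral_mono' measurableSet_Ioi fun s hs => ?_
    have hs' : 2 * M < s := hs
    have hW := hw_W_bound hM hs'
    calc g s * ∫⁻ r in Ioo (2 * M) s, f r
        ≤ g s * ENNReal.ofReal (4 * Real.sqrt 2 * Real.sqrt (s - 2 * M)) :=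
          mul_le_mul_right hW _
      _ ≤ ENNReal.ofReal 8 *
          ENNReal.ofReal (Real.sqrt (1 - 2 * M / s) * (deriv φ s) ^ 2 * s ^ 2) := by
          have hv := (hwv_pos hM hs').le
          rw [hg, ← ENNReal.ofReal_mul
            (mul_nonneg (sq_nonneg _) (mul_nonneg hv (Real.sqrt_nonneg _))),
            ← ENNReal.ofReal_mul (by norm_num)]
          apply ENNReal.ofReal_le_ofReal
          have hs0 : 0 < s := hw_rpos hM hs'
          have hsm : 0 < s - 2 * M := by linarith
          have k0 : Real.sqrt (hwV M s) * Real.sqrt (s - 2 * M) ≤ Real.sqrt 2 := by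
            rw [← Real.sqrt_mul (hwV_pos hM hs').le]
            apply Real.sqrt_le_sqrt
            have h1 := hwV_le hM hs'
            have h2 : hwV M s * (s - 2 * M) ≤ (2 / s) * (s - 2 * M) := by
              apply mul_le_mul_of_nonneg_right h1 hsm.le
            have h3 : (2 / s) * (s - 2 * M) ≤ 2 := by
              rw [div_mul_eq_mul_div, div_le_iff₀ hs0]
              nlinarith
            linarith
          have e : (deriv φ s) ^ 2 * (hwv M s * Real.sqrt (hwV M s)) *
              (4 * Real.sqrt 2 * Real.sqrt (s - 2 * M))
              = ((deriv φ s) ^ 2 * hwv M s) *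
                (4 * Real.sqrt 2 * (Real.sqrt (hwV M s) * Real.sqrt (s - 2 * M))) := by ring
          rw [e]
          have hnn : (0:ℝ) ≤ (deriv φ s) ^ 2 * hwv M s := by
            have := hwv_pos hM hs'
            positivity
          calc ((deriv φ s) ^ 2 * hwv M s) *
              (4 * Real.sqrt 2 * (Real.sqrt (hwV M s) * Real.sqrt (s - 2 * M)))
              ≤ ((deriv φ s) ^ 2 * hwv M s) * (4 * Real.sqrt 2 * Real.sqrt 2) := by
                apply mul_le_mul_of_nonneg_left ?_ hnn
                apply mul_le_mul_of_nonneg_left k0 (by positivity)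
            _ = 8 * (Real.sqrt (1 - 2 * M / s) * (deriv φ s) ^ 2 * s ^ 2) := by
                rw [mul_assoc 4, Real.mul_self_sqrt (by norm_num : (0:ℝ) ≤ 2)]
                unfold hwv
                ring
  have step5 : (∫⁻ s in Ioi (2 * M), ENNReal.ofReal 8 *
        ENNReal.ofReal (Real.sqrt (1 - 2 * M / s) * (deriv φ s) ^ 2 * s ^ 2))
      = ENNReal.ofReal 8 * ∫⁻ s in Ioi (2 * M),
          ENNReal.ofReal (Real.sqrt (1 - 2 * M / s) * (deriv φ s) ^ 2 * s ^ 2) := by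
    rw [lintegral_const_mul]
    exact ((m2.mul ((measurable_deriv φ).pow_const 2)).mul (measurable_id.pow_const 2)).ennreal_ofReal
  calc (∫⁻ r in Set.Ioi (2 * M), ENNReal.ofReal ((φ r) ^ 2 / Real.sqrt (1 - 2 * M / r)))
      ≤ ∫⁻ r in Ioi (2 * M), f r * ∫⁻ s in Ioi r, g s := step1
    _ = ∫⁻ r in Ioi (2 * M), ∫⁻ s in Ioi (2 * M), f r * (Ioi r).indicator g s := step2
    _ = ∫⁻ s in Ioi (2 * M), ∫⁻ r in Ioi (2 * M), f r * (Ioi r).indicator g s := swap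
    _ = ∫⁻ s in Ioi (2 * M), g s * ∫⁻ r in Ioo (2 * M) s, f r := step3
    _ ≤ ∫⁻ s in Ioi (2 * M), ENNReal.ofReal 8 *
          ENNReal.ofReal (Real.sqrt (1 - 2 * M / s) * (deriv φ s) ^ 2 * s ^ 2) := step4
    _ = ENNReal.ofReal 8 * ∫⁻ s in Ioi (2 * M),
          ENNReal.ofReal (Real.sqrt (1 - 2 * M / s) * (deriv φ s) ^ 2 * s ^ 2) := step5
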